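/- limsup_{N→∞} |∑_{n=1}^{N} f(n) − 2^{N+1}| / 2^{N/2} = 3 and liminf_{N→∞} |∑_{n=1}^{N} f(n) − 2^{N+1}| / 2^{N/2} = 2√2, where 2^{N/2} denotes the real number 2 raised to the power N/2. -/

import Mathlib

/-- `f n` is the number of nonempty relatively prime subsets of `{1, ..., n}`. -/
def f (n : ℕ) : ℕ :=
  ((Finset.Icc 1 n).powerset.filter fun A => A.Nonempty ∧ A.gcd id = 1).card

open Finset Filter

namespace FLF

lemma card_nonempty (n : ℕ) :
    (((Finset.Icc 1 n).powerset.filter fun A => A.Nonempty).card) = 2^n - 1 := by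
  have : ((Finset.Icc 1 n).powerset.filter fun A => A.Nonempty)
      = (Finset.Icc 1 n).powerset.erase ∅ := by
    ext A
    simp [Finset.mem_erase, Finset.nonempty_iff_ne_empty, and_comm]
  rw [this, Finset.card_erase_of_mem (by simp), Finset.card_powerset, Nat.card_Icc]
  simp

lemma fiber_card (n d : ℕ) (hd : 1 ≤ d) :
    (((Finset.Icc 1 n).powerset.filter fun A => A.Nonempty ∧ A.gcd id = d).card) = f (n / d) := by
  classical
  rw [f]
  refine Finset.card_bij' (fun A _ => A.image (· / d)) (fun B _ => B.image (d * ·))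
    ?hi ?hj ?left ?right
  case hi =>
    intro A hA
    simp only [Finset.mem_filter, Finset.mem_powerset] at hA ⊢
    obtain ⟨hsub, hne, hgcd⟩ := hA
    have hdvd : ∀ a ∈ A, d ∣ a := fun a ha => hgcd ▸ Finset.gcd_dvd ha
    refine ⟨?_, hne.image _, ?_⟩
    · intro x hx
      simp only [Finset.mem_image] at hx
      obtain ⟨a, ha, rfl⟩ := hx
      have h1 := hsub ha
      simp only [Finset.mem_Icc] at h1 ⊢
      exact ⟨Nat.one_le_div_iff hd |>.2 (Nat.le_of_dvd h1.1 (hdvd a ha)),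
        Nat.div_le_div_right h1.2⟩
    · have h0 : (A.image (· / d)).gcd id = A.gcd (· / d) := Finset.gcd_image A
      rw [h0]
      have h2 : A.gcd (fun a => d * (a / d)) = A.gcd id :=
        Finset.gcd_congr rfl fun a ha => Nat.mul_div_cancel' (hdvd a ha)
      have h3 : A.gcd (fun a => d * (a / d)) = d * A.gcd (· / d) := by
        rw [Finset.gcd_mul_left]; simp
      rw [h2, hgcd] at h3
      exact (Nat.eq_of_mul_eq_mul_left hd (by rw [← h3, mul_one])).symm
  case hj =>
    intro B hB
    simp only [Finset.mem_filter, Finset.mem_powerset] at hB ⊢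
    obtain ⟨hsub, hne, hgcd⟩ := hB
    refine ⟨?_, hne.image _, ?_⟩
    · intro x hx
      simp only [Finset.mem_image] at hx
      obtain ⟨b, hb, rfl⟩ := hx
      have h1 := hsub hb
      simp only [Finset.mem_Icc] at h1 ⊢
      constructor
      · exact le_mul_of_le_of_one_le hd h1.1
      · calc d * b ≤ d * (n / d) := Nat.mul_le_mul_left d h1.2
          _ ≤ n := Nat.mul_div_le n d
    · rw [Finset.gcd_image]
      have : B.gcd ((id : ℕ → ℕ) ∘ (d * ·)) = d * B.gcd id := by
        rw [show ((id : ℕ → ℕ) ∘ (d * ·)) = fun x => d * id x from rfl, Finset.gcd_mul_left]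
        simp
      rw [this, hgcd, mul_one]
  case left =>
    intro A hA
    simp only [Finset.mem_filter, Finset.mem_powerset] at hA
    obtain ⟨hsub, hne, hgcd⟩ := hA
    have hdvd : ∀ a ∈ A, d ∣ a := fun a ha => hgcd ▸ Finset.gcd_dvd ha
    simp only [Finset.image_image]
    have : ∀ a ∈ A, ((d * ·) ∘ (· / d)) a = id a := fun a ha =>
      Nat.mul_div_cancel' (hdvd a ha)
    rw [Finset.image_congr fun a ha => this a ha, Finset.image_id]
  case right =>
    intro B hB
    simp only [Finset.image_image]
    have : ∀ b ∈ B, ((· / d) ∘ (d * ·)) b = id b := fun b hb => by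
      simp [Nat.mul_div_cancel_left _ (by omega : 0 < d)]
    rw [Finset.image_congr fun b hb => this b hb, Finset.image_id]

lemma recursion (n : ℕ) : ∑ d ∈ Finset.Icc 1 n, f (n / d) = 2^n - 1 := by
  classical
  have key : (((Finset.Icc 1 n).powerset.filter fun A => A.Nonempty).card)
      = ∑ d ∈ Finset.Icc 1 n, (((Finset.Icc 1 n).powerset.filter fun A => A.Nonempty).filter
        fun A => A.gcd id = d).card := by
    apply Finset.card_eq_sum_card_fiberwise
    intro A hA
    simp only [Finset.mem_coe, Finset.mem_filter, Finset.mem_powerset] at hA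
    obtain ⟨hsub, hne⟩ := hA
    obtain ⟨a, ha⟩ := hne
    have h1 := hsub ha
    simp only [Finset.mem_coe, Finset.mem_Icc] at h1 ⊢
    have hdvd : A.gcd id ∣ a := Finset.gcd_dvd ha
    constructor
    · rcases Nat.eq_zero_or_pos (A.gcd id) with h | h
      · exfalso
        have := Finset.gcd_eq_zero_iff.1 h a ha
        simp at this
        omega
      · omega
    · exact le_trans (Nat.le_of_dvd (by omega) hdvd) h1.2
  rw [card_nonempty] at key
  rw [key]
  apply Finset.sum_congr rfl
  intro d hd
  simp only [Finset.mem_Icc] at hd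
  rw [Finset.filter_filter, ← fiber_card n d hd.1]

lemma f_le (m : ℕ) : f m ≤ 2^m - 1 := by
  rw [f, ← card_nonempty m]
  apply Finset.card_le_card
  intro A hA
  simp only [Finset.mem_filter] at hA ⊢
  exact ⟨hA.1, hA.2.1⟩

lemma recursion' (n : ℕ) (hn : 1 ≤ n) :
    f n + ∑ d ∈ Finset.Icc 2 n, f (n / d) = 2^n - 1 := by
  have h := recursion n
  rw [← Finset.insert_Icc_succ_left_eq_Icc hn, Finset.sum_insert (by simp), Nat.div_one] at h
  exact h

lemma recursion'' (n : ℕ) (hn : 2 ≤ n) :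
    f n + f (n / 2) + ∑ d ∈ Finset.Icc 3 n, f (n / d) = 2^n - 1 := by
  have h := recursion' n (by omega)
  rw [← Finset.insert_Icc_succ_left_eq_Icc hn, Finset.sum_insert (by simp)] at h
  norm_num at h ⊢
  omega

lemma f_le' (m : ℕ) : (f m : ℤ) ≤ 2^m - 1 := by
  have h := f_le m
  have h1 : (1:ℕ) ≤ 2^m := Nat.one_le_two_pow
  have : (f m : ℤ) ≤ ((2^m - 1 : ℕ) : ℤ) := by exact_mod_cast h
  rwa [Nat.cast_sub h1, Nat.cast_pow] at this

lemma rec_int (n : ℕ) (hn : 2 ≤ n) :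
    (f n : ℤ) + (f (n / 2) : ℤ) + ∑ d ∈ Finset.Icc 3 n, (f (n / d) : ℤ) = 2^n - 1 := by
  have h := recursion'' n hn
  have h1 : (1:ℕ) ≤ 2^n := Nat.one_le_two_pow
  have := congrArg (Nat.cast : ℕ → ℤ) h
  push_cast [Nat.cast_sub h1] at this
  linarith [this]

lemma tail_bound (n : ℕ) :
    ∑ d ∈ Finset.Icc 3 n, (f (n / d) : ℤ) ≤ (n : ℤ) * 2^(n/3) := by
  calc ∑ d ∈ Finset.Icc 3 n, (f (n / d) : ℤ)
      ≤ ∑ d ∈ Finset.Icc 3 n, (2:ℤ)^(n/3) := by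
        apply Finset.sum_le_sum
        intro d hd
        simp only [Finset.mem_Icc] at hd
        calc (f (n / d) : ℤ) ≤ 2^(n/d) - 1 := f_le' _
          _ ≤ 2^(n/3) := by
              have : n / d ≤ n / 3 := Nat.div_le_div_left hd.1 (by norm_num)
              have := pow_le_pow_right₀ (by norm_num : (1:ℤ) ≤ 2) this
              omega
    _ = ((Finset.Icc 3 n).card : ℤ) * 2^(n/3) := by rw [Finset.sum_const]; ring
    _ ≤ (n : ℤ) * 2^(n/3) := by
        apply mul_le_mul_of_nonneg_right _ (by positivity)
        rw [Nat.card_Icc]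
        exact_mod_cast (by omega : n + 1 - 3 ≤ n)

lemma tail_nonneg (n : ℕ) : 0 ≤ ∑ d ∈ Finset.Icc 3 n, (f (n / d) : ℤ) :=
  Finset.sum_nonneg fun d _ => by positivity

lemma f_low (n : ℕ) : (2:ℤ)^n - 2^(n/2) - (n:ℤ) * 2^(n/3) ≤ (f n : ℤ) := by
  rcases Nat.lt_or_ge n 2 with h | h
  · interval_cases n <;> simp
  · have hrec := rec_int n h
    have h1 := f_le' (n / 2)
    have h2 := tail_bound n
    linarith

lemma f_high (n : ℕ) : (f n : ℤ) ≤ 2^n - 2^(n/2) + ((n:ℤ)+1) * 2^(n/3) := by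
  rcases Nat.lt_or_ge n 2 with h | h
  · interval_cases n
    · simp [show f 0 = 0 from rfl]
    · have := f_le' 1
      push_cast at this ⊢
      norm_num at this ⊢
      omega
  · have hrec := rec_int n h
    have htail := tail_nonneg n
    have hlow := f_low (n / 2)
    rw [show n / 2 / 2 = n / 4 from Nat.div_div_eq_div_mul n 2 2,
      show n / 2 / 3 = n / 6 from Nat.div_div_eq_div_mul n 2 3] at hlow
    have e1 : (2:ℤ)^(n/4) ≤ 2^(n/3) :=
      pow_le_pow_right₀ (by norm_num) (Nat.div_le_div_left (by norm_num) (by norm_num))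
    have e2 : (2:ℤ)^(n/6) ≤ 2^(n/3) :=
      pow_le_pow_right₀ (by norm_num) (Nat.div_le_div_left (by norm_num) (by norm_num))
    have e3 : ((n/2 : ℕ) : ℤ) ≤ (n : ℤ) := by exact_mod_cast Nat.div_le_self n 2
    have e4 : (0:ℤ) ≤ ((n/2 : ℕ) : ℤ) := by positivity
    have key : ((n/2 : ℕ) : ℤ) * 2^(n/6) ≤ (n : ℤ) * 2^(n/3) :=
      mul_le_mul e3 e2 (by positivity) (by positivity)
    have hp : (0:ℤ) < 2^(n/3) := by positivity
    linarith

lemma sum_pow (N : ℕ) : ∑ n ∈ Finset.Icc 1 N, (2:ℤ)^n = 2^(N+1) - 2 := by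
  induction N with
  | zero => simp
  | succ N ih => rw [Finset.sum_Icc_succ_top (by omega), ih]; ring

lemma T_even (M : ℕ) : ∑ n ∈ Finset.Icc 1 (2*M), (2:ℤ)^(n/2) = 3*2^M - 3 := by
  induction M with
  | zero => simp
  | succ M ih =>
    have h1 : 2*(M+1) = (2*M+1)+1 := by ring
    rw [h1, Finset.sum_Icc_succ_top (by omega), Finset.sum_Icc_succ_top (by omega), ih,
      show (2*M+1)/2 = M by omega, show (2*M+1+1)/2 = M+1 by omega]
    ring

lemma T_odd (M : ℕ) : ∑ n ∈ Finset.Icc 1 (2*M+1), (2:ℤ)^(n/2) = 4*2^M - 3 := by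
  rw [Finset.sum_Icc_succ_top (by omega), T_even, show (2*M+1)/2 = M by omega]
  ring

lemma R_bound (N : ℕ) :
    |∑ n ∈ Finset.Icc 1 N, ((f n : ℤ) - 2^n + 2^(n/2))| ≤ (N:ℤ)*((N:ℤ)+1)*2^(N/3) := by
  calc |∑ n ∈ Finset.Icc 1 N, ((f n : ℤ) - 2^n + 2^(n/2))|
      ≤ ∑ n ∈ Finset.Icc 1 N, |(f n : ℤ) - 2^n + 2^(n/2)| :=
        Finset.abs_sum_le_sum_abs _ _
    _ ≤ ∑ n ∈ Finset.Icc 1 N, ((N:ℤ)+1)*2^(N/3) := by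
        apply Finset.sum_le_sum
        intro n hn
        simp only [Finset.mem_Icc] at hn
        have h1 := f_low n
        have h2 := f_high n
        have h3 : ((n:ℤ)+1) * 2^(n/3) ≤ ((N:ℤ)+1)*2^(N/3) := by
          apply mul_le_mul (by exact_mod_cast by omega)
            (pow_le_pow_right₀ (by norm_num) (Nat.div_le_div_right hn.2)) (by positivity)
            (by positivity)
        have h4 : (0:ℤ) ≤ (n:ℤ) := by positivity
        have h5 : (0:ℤ) < 2^(n/3) := by positivity
        rw [abs_le]
        constructor <;> nlinarith
    _ ≤ (N:ℤ)*((N:ℤ)+1)*2^(N/3) := by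
        rw [Finset.sum_const, Nat.card_Icc]
        have : ((N + 1 - 1 : ℕ):ℤ) = (N:ℤ) := by push_cast; ring
        rw [nsmul_eq_mul, this, mul_assoc]

lemma S_formula (N : ℕ) :
    ∑ n ∈ Finset.Icc 1 N, (f n : ℤ)
      = 2^(N+1) - 2 - (∑ n ∈ Finset.Icc 1 N, (2:ℤ)^(n/2))
        + ∑ n ∈ Finset.Icc 1 N, ((f n : ℤ) - 2^n + 2^(n/2)) := by
  rw [← sum_pow N, ← Finset.sum_sub_distrib, ← Finset.sum_add_distrib]
  apply Finset.sum_congr rfl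
  intros; ring

noncomputable def u (N : ℕ) : ℝ :=
  |(∑ n ∈ Finset.Icc 1 N, (f n : ℝ)) - 2 ^ (N + 1)| / (2 : ℝ) ^ ((N : ℝ) / 2)

noncomputable def εb (M : ℕ) : ℝ :=
  ((2*(M:ℝ)+1)*(2*(M:ℝ)+2)*2^((2*M+1)/3) + 1)/2^M

lemma g0_tendsto :
    Tendsto (fun q : ℕ => 81*((q:ℝ)+1)^2 * (1/2)^q) atTop (nhds 0) := by
  have h := tendsto_pow_const_div_const_pow_of_one_lt 2 (by norm_num : (1:ℝ) < 2)
  have h1 : Tendsto (fun q : ℕ => ((q+1:ℕ):ℝ)^2 / 2^(q+1)) atTop (nhds 0) :=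
    h.comp (tendsto_add_atTop_nat 1)
  have h2 := h1.const_mul (162 : ℝ)
  rw [mul_zero] at h2
  apply h2.congr
  intro q
  push_cast
  rw [pow_succ]
  field_simp
  have hq : (2:ℝ)^q * (1/2)^q = 1 := by rw [← mul_pow]; norm_num
  linear_combination (-162) * hq

lemma εb_le (M : ℕ) : εb M ≤ 81*(((M/3 : ℕ):ℝ)+1)^2 * (1/2)^(M/3 : ℕ) := by
  set q := M / 3 with hq
  set e := (2*M+1)/3 with he
  have hqe : e + q ≤ M := by omega
  have hM : M ≤ 3*q + 2 := by omega
  have h2 : (2:ℝ)^e * 2^q ≤ 2^M := by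
    rw [← pow_add]
    exact pow_le_pow_right₀ (by norm_num) hqe
  rw [εb]
  rw [div_le_iff₀ (by positivity)]
  have he1 : (1:ℝ) ≤ 2^e := one_le_pow₀ (by norm_num)
  have hMc : (M:ℝ) ≤ 3*(q:ℝ) + 2 := by exact_mod_cast hM
  have hqc : (0:ℝ) ≤ (q:ℝ) := by positivity
  have key : (2*(M:ℝ)+1)*(2*(M:ℝ)+2) + 1 ≤ 81*((q:ℝ)+1)^2 := by nlinarith
  calc (2*(M:ℝ)+1)*(2*(M:ℝ)+2)*2^e + 1
      ≤ ((2*(M:ℝ)+1)*(2*(M:ℝ)+2) + 1) * 2^e := by nlinarith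
    _ ≤ (81*((q:ℝ)+1)^2) * 2^e := by
        apply mul_le_mul_of_nonneg_right key (by positivity)
    _ = (81*((q:ℝ)+1)^2 * (1/2)^q) * (2^e * 2^q) := by
        rw [div_pow, one_pow]
        field_simp
    _ ≤ (81*((q:ℝ)+1)^2 * (1/2)^q) * 2^M := by
        apply mul_le_mul_of_nonneg_left h2 (by positivity)

lemma εb_nonneg (M : ℕ) : 0 ≤ εb M := by rw [εb]; positivity

lemma εb_tendsto : Tendsto εb atTop (nhds 0) := by
  have hdiv : Tendsto (fun M : ℕ => M/3) atTop atTop :=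
    Filter.tendsto_atTop_atTop.2 fun b => ⟨3*b, fun a ha => by omega⟩
  exact squeeze_zero εb_nonneg εb_le (g0_tendsto.comp hdiv)

lemma hden_even (M : ℕ) : (2:ℝ) ^ (((2*M : ℕ) : ℝ)/2) = 2^M := by
  rw [show ((2*M : ℕ) : ℝ)/2 = ((M:ℕ) : ℝ) by push_cast; ring, Real.rpow_natCast]

lemma hden_odd (M : ℕ) : (2:ℝ) ^ (((2*M+1 : ℕ) : ℝ)/2) = 2^M * Real.sqrt 2 := by
  rw [show ((2*M+1 : ℕ) : ℝ)/2 = ((M:ℕ) : ℝ) + 1/2 by push_cast; ring,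
    Real.rpow_add (by norm_num), Real.rpow_natCast, Real.sqrt_eq_rpow]

lemma num_est (N : ℕ) :
    |(∑ n ∈ Finset.Icc 1 N, (f n : ℝ)) - (2^(N+1) - 2
      - ((∑ n ∈ Finset.Icc 1 N, (2:ℤ)^(n/2) : ℤ) : ℝ))|
      ≤ (N:ℝ)*((N:ℝ)+1)*2^(N/3) := by
  have h := S_formula N
  have hb := R_bound N
  have e : (∑ n ∈ Finset.Icc 1 N, (f n : ℝ)) - (2^(N+1) - 2
      - ((∑ n ∈ Finset.Icc 1 N, (2:ℤ)^(n/2) : ℤ) : ℝ))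
      = ((∑ n ∈ Finset.Icc 1 N, ((f n : ℤ) - 2^n + 2^(n/2)) : ℤ) : ℝ) := by
    have h' := congrArg (fun z : ℤ => (z : ℝ)) h
    push_cast at h' ⊢
    linarith
  rw [e, ← Int.cast_abs]
  calc ((|∑ n ∈ Finset.Icc 1 N, ((f n : ℤ) - 2^n + 2^(n/2))| : ℤ) : ℝ)
      ≤ (((N:ℤ)*((N:ℤ)+1)*2^(N/3) : ℤ) : ℝ) := by exact_mod_cast hb
    _ = (N:ℝ)*((N:ℝ)+1)*2^(N/3) := by push_cast; ring

lemma even_est (M : ℕ) : |u (2*M) - 3| ≤ εb M := by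
  have hnum := num_est (2*M)
  rw [T_even] at hnum
  set x := (∑ n ∈ Finset.Icc 1 (2*M), (f n : ℝ)) - 2 ^ (2*M + 1) with hx
  have hxe : |x + 3*2^M - 1| ≤ (2*(M:ℝ))*(2*(M:ℝ)+1)*2^((2*M)/3) := by
    have e : x + 3*2^M - 1 = (∑ n ∈ Finset.Icc 1 (2*M), (f n : ℝ))
        - (2^(2*M+1) - 2 - ((3*2^M - 3 : ℤ) : ℝ)) := by push_cast; ring
    rw [e]
    calc _ ≤ ((2*M : ℕ):ℝ)*(((2*M : ℕ):ℝ)+1)*2^((2*M)/3) := hnum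
      _ = (2*(M:ℝ))*(2*(M:ℝ)+1)*2^((2*M)/3) := by push_cast; ring
  have hu : u (2*M) = |x| / 2^M := by rw [u, hden_even]
  have hpos : (0:ℝ) < 2^M := by positivity
  rw [hu, show (3:ℝ) = 3*2^M/2^M by field_simp, ← sub_div, abs_div, abs_of_pos hpos,
    div_le_iff₀ hpos]
  have tri : |(|x| - |(-(3*(2:ℝ)^M))|)| ≤ |x - (-(3*2^M))| := abs_abs_sub_abs_le_abs_sub _ _
  rw [abs_neg, abs_of_pos (by positivity : (0:ℝ) < 3*2^M)] at tri
  have h3 : |x + 3*2^M| ≤ (2*(M:ℝ))*(2*(M:ℝ)+1)*2^((2*M)/3) + 1 := by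
    calc |x + 3*2^M| = |(x + 3*2^M - 1) + 1| := by ring_nf
      _ ≤ |x + 3*2^M - 1| + 1 := by
          have := abs_add_le (x + 3*2^M - 1) 1
          simpa using this
      _ ≤ (2*(M:ℝ))*(2*(M:ℝ)+1)*2^((2*M)/3) + 1 := by linarith
  have h4 : |(|x| - 3*2^M)| ≤ (2*(M:ℝ))*(2*(M:ℝ)+1)*2^((2*M)/3) + 1 := by
    rw [show x - (-(3*(2:ℝ)^M)) = x + 3*2^M by ring] at tri
    linarith
  have h5 : (2*(M:ℝ))*(2*(M:ℝ)+1)*2^((2*M)/3) + 1 ≤ εb M * 2^M := by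
    rw [εb, div_mul_cancel₀ _ (ne_of_gt hpos)]
    have e1 : (2:ℝ)^((2*M)/3) ≤ 2^((2*M+1)/3) :=
      pow_le_pow_right₀ (by norm_num) (by omega)
    have e2 : (0:ℝ) ≤ (M:ℝ) := by positivity
    have e3 : 2*(M:ℝ)*(2*(M:ℝ)+1) ≤ (2*(M:ℝ)+1)*(2*(M:ℝ)+2) := by nlinarith
    have e4 := mul_le_mul e3 e1 (by positivity) (by positivity)
    linarith
  linarith

lemma odd_est (M : ℕ) : |u (2*M+1) - 2*Real.sqrt 2| ≤ εb M := by
  have hnum := num_est (2*M+1)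
  rw [T_odd] at hnum
  set x := (∑ n ∈ Finset.Icc 1 (2*M+1), (f n : ℝ)) - 2 ^ (2*M+1 + 1) with hx
  have hxe : |x + 4*2^M - 1| ≤ (2*(M:ℝ)+1)*(2*(M:ℝ)+2)*2^((2*M+1)/3) := by
    have e : x + 4*2^M - 1 = (∑ n ∈ Finset.Icc 1 (2*M+1), (f n : ℝ))
        - (2^(2*M+1+1) - 2 - ((4*2^M - 3 : ℤ) : ℝ)) := by push_cast; ring
    rw [e]
    calc _ ≤ ((2*M+1 : ℕ):ℝ)*(((2*M+1 : ℕ):ℝ)+1)*2^((2*M+1)/3) := hnum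
      _ = (2*(M:ℝ)+1)*(2*(M:ℝ)+2)*2^((2*M+1)/3) := by push_cast; ring
  have hs2 : (0:ℝ) < Real.sqrt 2 := Real.sqrt_pos.2 (by norm_num)
  have hs2' : Real.sqrt 2 * Real.sqrt 2 = 2 := Real.mul_self_sqrt (by norm_num)
  have hpos : (0:ℝ) < 2^M * Real.sqrt 2 := by positivity
  have hu : u (2*M+1) = |x| / (2^M * Real.sqrt 2) := by
    rw [u, hden_odd]
  rw [hu, show 2*Real.sqrt 2 = 4*2^M/(2^M * Real.sqrt 2) by
      field_simp; nlinarith, ← sub_div, abs_div, abs_of_pos hpos, div_le_iff₀ hpos]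
  have tri : |(|x| - |(-(4*(2:ℝ)^M))|)| ≤ |x - (-(4*2^M))| := abs_abs_sub_abs_le_abs_sub _ _
  rw [abs_neg, abs_of_pos (by positivity : (0:ℝ) < 4*2^M)] at tri
  have h3 : |x + 4*2^M| ≤ (2*(M:ℝ)+1)*(2*(M:ℝ)+2)*2^((2*M+1)/3) + 1 := by
    calc |x + 4*2^M| = |(x + 4*2^M - 1) + 1| := by ring_nf
      _ ≤ |x + 4*2^M - 1| + 1 := by
          have := abs_add_le (x + 4*2^M - 1) 1
          simpa using this
      _ ≤ _ := by linarith
  have h4 : |(|x| - 4*2^M)| ≤ (2*(M:ℝ)+1)*(2*(M:ℝ)+2)*2^((2*M+1)/3) + 1 := by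
    rw [show x - (-(4*(2:ℝ)^M)) = x + 4*2^M by ring] at tri
    linarith
  have hup : (1:ℝ) ≤ Real.sqrt 2 := by nlinarith
  have h5 : (2*(M:ℝ)+1)*(2*(M:ℝ)+2)*2^((2*M+1)/3) + 1 ≤ εb M * (2^M * Real.sqrt 2) := by
    rw [εb]
    have hpos2 : (0:ℝ) < 2^M := by positivity
    rw [div_mul_eq_mul_div, mul_assoc, mul_comm ((2:ℝ)^M), ← mul_assoc,
      mul_div_assoc, mul_div_cancel_right₀ _ (ne_of_gt hpos2)]
    have hP : (0:ℝ) ≤ (2*(M:ℝ)+1)*(2*(M:ℝ)+2)*2^((2*M+1)/3) + 1 := by positivity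
    nlinarith [mul_le_mul_of_nonneg_left hup hP]
  linarith

lemma even_tendsto : Tendsto (fun M => u (2*M)) atTop (nhds 3) := by
  have h0 : Tendsto (fun M => u (2*M) - 3) atTop (nhds 0) :=
    squeeze_zero_norm (fun M => by simpa [Real.norm_eq_abs] using even_est M) εb_tendsto
  have := h0.add_const 3
  simpa using this

lemma odd_tendsto : Tendsto (fun M => u (2*M+1)) atTop (nhds (2*Real.sqrt 2)) := by
  have h0 : Tendsto (fun M => u (2*M+1) - 2*Real.sqrt 2) atTop (nhds 0) :=
    squeeze_zero_norm (fun M => by simpa [Real.norm_eq_abs] using odd_est M) εb_tendsto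
  have := h0.add_const (2*Real.sqrt 2)
  simpa using this

lemma u_nonneg : ∀ N, 0 ≤ u N := by
  intro N
  rw [u]
  positivity

lemma sqrt2_lt : 2*Real.sqrt 2 < 3 := by
  nlinarith [Real.sq_sqrt (by norm_num : (2:ℝ) ≥ 0), Real.sqrt_nonneg 2,
    Real.sqrt_lt_sqrt (by norm_num : (0:ℝ) ≤ 2) (by norm_num : (2:ℝ) < 9/4)]

lemma parity_eventually {P : ℕ → Prop} (h1 : ∀ᶠ M in atTop, P (2*M))
    (h2 : ∀ᶠ M in atTop, P (2*M+1)) : ∀ᶠ N in atTop, P N := by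
  rw [eventually_atTop] at h1 h2 ⊢
  obtain ⟨M1, hM1⟩ := h1
  obtain ⟨M2, hM2⟩ := h2
  refine ⟨2*(M1+M2)+2, fun N hN => ?_⟩
  rcases Nat.even_or_odd N with ⟨K, hK⟩ | ⟨K, hK⟩
  · have : N = 2*K := by omega
    rw [this]; exact hM1 K (by omega)
  · rw [hK]; exact hM2 K (by omega)

lemma tendsto_two_mul : Tendsto (fun M : ℕ => 2*M) atTop atTop :=
  tendsto_atTop_atTop.2 fun b => ⟨b, fun a ha => by omega⟩

lemma tendsto_two_mul_add : Tendsto (fun M : ℕ => 2*M+1) atTop atTop :=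
  tendsto_atTop_atTop.2 fun b => ⟨b, fun a ha => by omega⟩

lemma u_le_four : ∀ᶠ N in atTop, u N ≤ 4 := by
  apply parity_eventually
  · exact even_tendsto.eventually (eventually_le_nhds (by norm_num))
  · exact odd_tendsto.eventually (eventually_le_nhds (by linarith [sqrt2_lt]))

lemma u_bddAbove : IsBoundedUnder (· ≤ ·) atTop u := ⟨4, by
  rw [eventually_map]; exact u_le_four⟩

lemma u_bddBelow : IsBoundedUnder (· ≥ ·) atTop u := ⟨0, by
  rw [eventually_map]; exact Eventually.of_forall u_nonneg⟩

lemma u_cobddAbove : IsCoboundedUnder (· ≤ ·) atTop u :=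
  isCoboundedUnder_le_of_eventually_le atTop (x := 0) (Eventually.of_forall u_nonneg)

lemma u_cobddBelow : IsCoboundedUnder (· ≥ ·) atTop u :=
  isCoboundedUnder_ge_of_eventually_le atTop (x := 4) u_le_four

lemma limsup_u : limsup u atTop = 3 := by
  apply le_antisymm
  · apply le_of_forall_pos_le_add
    intro ε hε
    apply limsup_le_of_le u_cobddAbove
    apply parity_eventually
    · exact even_tendsto.eventually (eventually_le_nhds (by linarith))
    · exact odd_tendsto.eventually (eventually_le_nhds (by linarith [sqrt2_lt]))
  · by_contra hlt
    push_neg at hlt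
    set L := limsup u atTop
    have hε : (3 - L)/2 > 0 := by linarith
    have hfreq : ∃ᶠ N in atTop, 3 - (3-L)/2 ≤ u N := by
      apply tendsto_two_mul.frequently
      exact (even_tendsto.eventually (eventually_ge_nhds (by linarith))).frequently
    have := le_limsup_of_frequently_le hfreq u_bddAbove
    linarith

lemma liminf_u : liminf u atTop = 2*Real.sqrt 2 := by
  have hs : 0 < Real.sqrt 2 := Real.sqrt_pos.2 (by norm_num)
  apply le_antisymm
  · by_contra hlt
    push_neg at hlt
    set L := liminf u atTop
    have hε : (L - 2*Real.sqrt 2)/2 > 0 := by linarith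
    have hfreq : ∃ᶠ N in atTop, u N ≤ 2*Real.sqrt 2 + (L - 2*Real.sqrt 2)/2 := by
      apply tendsto_two_mul_add.frequently
      exact (odd_tendsto.eventually (eventually_le_nhds (by linarith))).frequently
    have := liminf_le_of_frequently_le hfreq u_bddBelow
    linarith
  · apply le_of_forall_pos_le_add
    intro ε hε
    have hev : ∀ᶠ N in atTop, 2*Real.sqrt 2 - ε ≤ u N := by
      apply parity_eventually
      · exact even_tendsto.eventually (eventually_ge_nhds (by linarith [sqrt2_lt]))
      · exact odd_tendsto.eventually (eventually_ge_nhds (by linarith))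
    have := le_liminf_of_le u_cobddBelow hev
    linarith

end FLF

/-- `limsup = 3` and `liminf = 2√2` for `|∑_{n ≤ N} f(n) - 2^{N+1}| / 2^{N/2}`. -/
theorem limsup_liminf_f_error :
    Filter.limsup
      (fun N : ℕ => |(∑ n ∈ Finset.Icc 1 N, (f n : ℝ)) - 2 ^ (N + 1)| /
        (2 : ℝ) ^ ((N : ℝ) / 2)) Filter.atTop = 3 ∧
    Filter.liminf
      (fun N : ℕ => |(∑ n ∈ Finset.Icc 1 N, (f n : ℝ)) - 2 ^ (N + 1)| /
        (2 : ℝ) ^ ((N : ℝ) / 2)) Filter.atTop = 2 * Real.sqrt 2 := by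
  constructor
  · have := FLF.limsup_u
    rwa [show FLF.u = fun N : ℕ => |(∑ n ∈ Finset.Icc 1 N, (f n : ℝ)) - 2 ^ (N + 1)| /
      (2 : ℝ) ^ ((N : ℝ) / 2) from rfl] at this
  · have := FLF.liminf_u
    rwa [show FLF.u = fun N : ℕ => |(∑ n ∈ Finset.Icc 1 N, (f n : ℝ)) - 2 ^ (N + 1)| /
      (2 : ℝ) ^ ((N : ℝ) / 2) from rfl] at this
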